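/- Reciprocity for Apostol's generalized Dedekind sums: for relatively prime positive integers h, m and positive integer p, h m^p S_p(h,m) + m h^p S_p(m,h) = \sum_{\mu=0}^{m-1} \sum_{\nu=0}^{h-1} (mh)^{p-1} (\mu h + m\nu) \overline{B}_p(\nu/h + \mu/m). -/

import Mathlib

noncomputable section

/-- Signed Stirling numbers of the first kind. -/
def stirling1 : ℕ → ℕ → ℤ
  | 0, 0 => 1
  | 0, _ + 1 => 0
  | _ + 1, 0 => 0
  | n + 1, m + 1 => stirling1 n m - n * stirling1 n (m + 1)

/-- `n!`-normalized coefficients of `Ei_k (log (1+t))`. -/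
def polyExpCoeff (k : ℤ) (n : ℕ) : ℚ :=
  ∑ m ∈ Finset.Icc 1 n, (stirling1 n m : ℚ) / (m : ℚ) ^ (k - 1)

/-- Type 2 poly-Bernoulli numbers of index `k`, defined by the recursion coming from the
generating function `Ei_k (log (1+t)) / (e^t - 1) = ∑ B_n^{(k)} t^n/n!`. -/
def polyBernoulli (k : ℤ) : ℕ → ℚ
  | n =>
    (polyExpCoeff k (n + 1) -
      ∑ l ∈ (Finset.range n).attach, ((n + 1).choose l.1 : ℚ) * polyBernoulli k l.1) / (n + 1)
  termination_by n => n
  decreasing_by exact Finset.mem_range.mp l.2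

/-- Type 2 poly-Bernoulli polynomials of index `k`, as functions on `ℝ`. -/
def polyBernoulliPoly (k : ℤ) (n : ℕ) (x : ℝ) : ℝ :=
  ∑ l ∈ Finset.range (n + 1), (n.choose l : ℝ) * (polyBernoulli k l : ℝ) * x ^ (n - l)

/-- Bernoulli polynomials as functions on `ℝ`. -/
def bernoulliPolyFun (n : ℕ) (x : ℝ) : ℝ :=
  ∑ l ∈ Finset.range (n + 1), (n.choose l : ℝ) * (bernoulli l : ℝ) * x ^ (n - l)

/-- Bernoulli functions `B̄_n(x) = B_n(⟨x⟩)`. -/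
def bernoulliBar (n : ℕ) (x : ℝ) : ℝ := bernoulliPolyFun n (Int.fract x)

/-- Type 2 poly-Bernoulli functions `B̄_n^{(k)}(x) = B_n^{(k)}(⟨x⟩)`. -/
def polyBernoulliBar (k : ℤ) (n : ℕ) (x : ℝ) : ℝ := polyBernoulliPoly k n (Int.fract x)

/-- Poly-Dedekind sums `S_p^{(k)}(h,m)`. -/
def polyDedekindSum (k : ℤ) (p h m : ℕ) : ℝ :=
  ∑ μ ∈ Finset.Ico 1 m, (μ / m : ℝ) * polyBernoulliBar k p (h * μ / m)

/-- Apostol's generalized Dedekind sums `S_p(h,m)`. -/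
def genDedekindSum (p h m : ℕ) : ℝ :=
  ∑ μ ∈ Finset.Ico 1 m, (μ / m : ℝ) * bernoulliBar p (h * μ / m)

/-- The polyexponential function `Ei_k`. -/
def polyExp (k : ℤ) (x : ℝ) : ℝ :=
  ∑' n : ℕ, x ^ (n + 1) / ((n + 1 : ℝ) ^ k * (Nat.factorial n : ℝ))

/-- The sawtooth function `((x))`. -/
def sawtooth (x : ℝ) : ℝ := if Int.fract x = 0 then 0 else Int.fract x - 1 / 2

end

section RaabeAux
open Polynomial PowerSeries Finset


lemma raabe_key (h : ℕ) (hh : 0 < h) (y : ℚ) :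
    (∑ ν ∈ Finset.range h,
        rescale (h : ℚ) (mk fun n => aeval ((y + ν) / h) ((1 / n.factorial : ℚ) • Polynomial.bernoulli n)))
      = (h : ℚ) • mk fun n => aeval y ((1 / n.factorial : ℚ) • Polynomial.bernoulli n) := by
  have hq : (h : ℚ) ≠ 0 := Nat.cast_ne_zero.2 hh.ne'
  have hne : rescale (h : ℚ) (exp ℚ) - 1 ≠ 0 := by
    intro hcontra
    have := congrArg (PowerSeries.coeff 1) hcontra
    simp [PowerSeries.coeff_rescale, PowerSeries.coeff_exp] at this
    exact hh.ne' this
  apply mul_right_cancel₀ hne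
  have expand : ∀ ν : ℕ,
      rescale (h : ℚ) (mk fun n => aeval ((y + ν) / h) ((1 / n.factorial : ℚ) • Polynomial.bernoulli n))
        * (rescale (h : ℚ) (exp ℚ) - 1)
      = (PowerSeries.C (h : ℚ) * PowerSeries.X) * (rescale y (exp ℚ) * exp ℚ ^ ν) := by
    intro ν
    have := Polynomial.bernoulli_generating_function ((y + (ν : ℚ)) / h)
    calc rescale (h : ℚ) (mk fun n => aeval ((y + ν) / h) ((1 / n.factorial : ℚ) • Polynomial.bernoulli n))
          * (rescale (h : ℚ) (exp ℚ) - 1)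
        = rescale (h : ℚ) ((mk fun n => aeval ((y + ν) / h) ((1 / n.factorial : ℚ) • Polynomial.bernoulli n)) * (exp ℚ - 1)) := by
          rw [map_mul, map_sub, map_one]
      _ = rescale (h : ℚ) (PowerSeries.X * rescale ((y + ν) / h) (exp ℚ)) := by rw [this]
      _ = rescale (h : ℚ) PowerSeries.X * rescale (((y + ν) / h) * h) (exp ℚ) := by
          rw [map_mul, rescale_rescale]
      _ = (PowerSeries.C (h : ℚ) * PowerSeries.X) * rescale (y + ν) (exp ℚ) := by
          rw [rescale_X, div_mul_cancel₀ _ hq]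
      _ = (PowerSeries.C (h : ℚ) * PowerSeries.X) * (rescale y (exp ℚ) * exp ℚ ^ ν) := by
          rw [exp_pow_eq_rescale_exp, exp_mul_exp_eq_exp_add]
  rw [Finset.sum_mul]
  simp_rw [expand]
  rw [← Finset.mul_sum]
  have bgf := Polynomial.bernoulli_generating_function (A := ℚ) y
  have geom : (∑ ν ∈ Finset.range h, exp ℚ ^ ν) * (exp ℚ - 1) = rescale (h:ℚ) (exp ℚ) - 1 := by
    rw [geom_sum_mul, exp_pow_eq_rescale_exp]
  calc PowerSeries.C (h : ℚ) * PowerSeries.X * ∑ ν ∈ Finset.range h, rescale y (exp ℚ) * exp ℚ ^ ν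
      = PowerSeries.C (h : ℚ) * ((PowerSeries.X * rescale y (exp ℚ)) * ∑ ν ∈ Finset.range h, exp ℚ ^ ν) := by
        rw [← Finset.mul_sum]; ring
    _ = PowerSeries.C (h : ℚ) * (((mk fun n => aeval y ((1 / n.factorial : ℚ) • Polynomial.bernoulli n)) * (exp ℚ - 1)) * ∑ ν ∈ Finset.range h, exp ℚ ^ ν) := by
        rw [bgf]
    _ = PowerSeries.C (h : ℚ) * ((mk fun n => aeval y ((1 / n.factorial : ℚ) • Polynomial.bernoulli n)) * ((∑ ν ∈ Finset.range h, exp ℚ ^ ν) * (exp ℚ - 1))) := by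
        ring
    _ = PowerSeries.C (h : ℚ) * (mk fun n => aeval y ((1 / n.factorial : ℚ) • Polynomial.bernoulli n)) * (rescale (h:ℚ) (exp ℚ) - 1) := by
        rw [geom]; ring
    _ = (h : ℚ) • (mk fun n => aeval y ((1 / n.factorial : ℚ) • Polynomial.bernoulli n)) * (rescale (h:ℚ) (exp ℚ) - 1) := by
        rw [PowerSeries.smul_eq_C_mul]

lemma raabe_poly (h p : ℕ) (hh : 0 < h) (y : ℚ) :
    (h : ℚ) ^ p * ∑ ν ∈ Finset.range h, (Polynomial.bernoulli p).eval ((y + ν) / h)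
      = (h : ℚ) * (Polynomial.bernoulli p).eval y := by
  have key := congrArg (PowerSeries.coeff p) (raabe_key h hh y)
  simp only [map_sum, PowerSeries.coeff_rescale, PowerSeries.coeff_mk, PowerSeries.coeff_smul,
    map_smul, smul_eq_mul, Polynomial.coe_aeval_eq_eval, one_div] at key
  have hfac : (p.factorial : ℚ) ≠ 0 := Nat.cast_ne_zero.2 p.factorial_ne_zero
  simp only [← mul_assoc, mul_comm _ ((p.factorial : ℚ)⁻¹), mul_assoc, ← Finset.mul_sum] at key
  rw [mul_left_comm, mul_left_comm ((h : ℚ))] at key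
  exact mul_left_cancel₀ (inv_ne_zero hfac) key

lemma raabe_fract (h p : ℕ) (hh : 0 < h) (x : ℚ) :
    (h : ℚ) ^ p * ∑ ν ∈ Finset.range h, (Polynomial.bernoulli p).eval (Int.fract (x + ν / h))
      = (h : ℚ) * (Polynomial.bernoulli p).eval (Int.fract ((h : ℚ) * x)) := by
  have hq : (h : ℚ) ≠ 0 := Nat.cast_ne_zero.2 hh.ne'
  have hz : (h : ℤ) ≠ 0 := Int.natCast_ne_zero.2 hh.ne'
  have hzpos : (0 : ℤ) < h := by exact_mod_cast hh
  set n : ℤ := ⌊(h : ℚ) * x⌋ with hn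
  set y : ℚ := Int.fract ((h : ℚ) * x) with hy
  have hy0 : 0 ≤ y := Int.fract_nonneg _
  have hy1 : y < 1 := Int.fract_lt_one _
  have hny : (n : ℚ) + y = (h : ℚ) * x := by rw [hy, Int.fract]; ring
  have hx : x = ((n : ℚ) + y) / h := by rw [hny, mul_div_cancel_left₀ _ hq]
  have step : ∀ ν : ℕ, Int.fract (x + (ν : ℚ) / h) = (y + (((n + ν) % h : ℤ) : ℚ)) / h := by
    intro ν
    have hdm : (h : ℤ) * ((n + ν) / h) + (n + ν) % h = n + ν := Int.mul_ediv_add_emod _ _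
    have hr0 : (0 : ℤ) ≤ (n + ν) % h := Int.emod_nonneg _ hz
    have hr1 : (n + ν) % h < h := Int.emod_lt_of_pos _ hzpos
    have harg : x + (ν : ℚ) / h
        = (((n + ν) / h : ℤ) : ℚ) + (y + (((n + ν) % h : ℤ) : ℚ)) / h := by
      rw [hx]
      have := congrArg (fun z : ℤ => (z : ℚ)) hdm
      push_cast at this
      field_simp
      linarith [this]
    rw [harg, Int.fract_intCast_add, Int.fract_eq_self.2 ⟨?_, ?_⟩]
    · positivity
    · rw [div_lt_one (by positivity)]
      have : (((n + ν) % h : ℤ) : ℚ) ≤ (h : ℚ) - 1 := by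
        have : (n + ν) % h ≤ (h : ℤ) - 1 := by omega
        exact_mod_cast this
      linarith
  have reindex : ∑ ν ∈ Finset.range h,
        (Polynomial.bernoulli p).eval ((y + (((n + ν) % h : ℤ) : ℚ)) / h)
      = ∑ r ∈ Finset.range h, (Polynomial.bernoulli p).eval ((y + (r : ℚ)) / h) := by
    refine Finset.sum_nbij' (fun ν : ℕ => ((n + ν) % h).toNat)
      (fun r : ℕ => (((r : ℤ) - n) % h).toNat) ?_ ?_ ?_ ?_ ?_
    · intro ν hν
      have hr0 : (0 : ℤ) ≤ (n + ν) % h := Int.emod_nonneg _ hz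
      have hr1 : (n + ν) % h < h := Int.emod_lt_of_pos _ hzpos
      simp only [Finset.mem_range]
      omega
    · intro r hr
      have hr0 : (0 : ℤ) ≤ ((r : ℤ) - n) % h := Int.emod_nonneg _ hz
      have hr1 : ((r : ℤ) - n) % h < h := Int.emod_lt_of_pos _ hzpos
      simp only [Finset.mem_range]
      omega
    · intro ν hν
      simp only [Finset.mem_range] at hν
      have hr0 : (0 : ℤ) ≤ (n + ν) % h := Int.emod_nonneg _ hz
      have e1 : ((((n + ν) % h).toNat : ℤ)) = (n + ν) % h := Int.toNat_of_nonneg hr0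
      have hkey : ((n + ν) % h - n) % h = (ν : ℤ) := by
        conv_lhs => rw [Int.sub_emod, Int.emod_emod_of_dvd _ dvd_rfl, ← Int.sub_emod]
        rw [add_sub_cancel_left]
        exact Int.emod_eq_of_lt (by positivity) (by exact_mod_cast hν)
      show (((((n + ν) % h).toNat : ℤ) - n) % h).toNat = ν
      rw [e1, hkey]
      simp
    · intro r hr
      simp only [Finset.mem_range] at hr
      have hr0 : (0 : ℤ) ≤ ((r : ℤ) - n) % h := Int.emod_nonneg _ hz
      have e1 : (((((r : ℤ) - n) % h).toNat : ℤ)) = ((r : ℤ) - n) % h := Int.toNat_of_nonneg hr0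
      have hkey : (n + ((r : ℤ) - n) % h) % h = (r : ℤ) := by
        conv_lhs => rw [Int.add_emod, Int.emod_emod_of_dvd _ dvd_rfl, ← Int.add_emod]
        rw [add_sub_cancel]
        exact Int.emod_eq_of_lt (by positivity) (by exact_mod_cast hr)
      show (((n + (((((r : ℤ) - n) % h).toNat : ℕ) : ℤ)) % h)).toNat = r
      rw [e1, hkey]
      simp
    · intro ν hν
      have hr0 : (0 : ℤ) ≤ (n + ν) % h := Int.emod_nonneg _ hz
      have e1 : ((((n + ν) % h).toNat : ℚ)) = (((n + ν) % h : ℤ) : ℚ) := by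
        exact_mod_cast congrArg (Int.cast : ℤ → ℚ) (Int.toNat_of_nonneg hr0)
      show _ = (Polynomial.bernoulli p).eval ((y + ((((n + ν) % h).toNat : ℕ) : ℚ)) / h)
      rw [e1]
  simp_rw [step]
  rw [reindex]
  exact raabe_poly h p hh y

lemma bar_cast (p : ℕ) (x : ℚ) :
    bernoulliBar p ((x : ℝ)) = (((Polynomial.bernoulli p).eval (Int.fract x) : ℚ) : ℝ) := by
  unfold bernoulliBar bernoulliPolyFun
  rw [← Rat.cast_fract, Polynomial.bernoulli, Polynomial.eval_finset_sum]
  push_cast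
  refine Finset.sum_congr rfl fun l _ => ?_
  rw [Polynomial.eval_monomial]
  push_cast
  ring

lemma raabe_real (h q : ℕ) (hh : 0 < h) (x : ℚ) :
    ∑ ν ∈ Finset.range h, bernoulliBar (q + 1) ((x : ℝ) + (ν : ℝ) / h)
      = bernoulliBar (q + 1) ((h : ℝ) * x) / (h : ℝ) ^ q := by
  have hq : (h : ℚ) ≠ 0 := Nat.cast_ne_zero.2 hh.ne'
  have hqr : (h : ℝ) ≠ 0 := Nat.cast_ne_zero.2 hh.ne'
  have key := raabe_fract h (q + 1) hh x
  have key2 : (∑ ν ∈ Finset.range h,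
      (Polynomial.bernoulli (q + 1)).eval (Int.fract (x + ν / h))) * (h : ℚ) ^ q
      = (Polynomial.bernoulli (q + 1)).eval (Int.fract ((h : ℚ) * x)) := by
    apply mul_left_cancel₀ hq
    rw [← key, pow_succ]
    ring
  have cast1 : ∀ ν : ℕ, bernoulliBar (q + 1) ((x : ℝ) + (ν : ℝ) / h)
      = (((Polynomial.bernoulli (q + 1)).eval (Int.fract (x + ν / h)) : ℚ) : ℝ) := by
    intro ν
    rw [show (x : ℝ) + (ν : ℝ) / h = ((x + ν / h : ℚ) : ℝ) by push_cast; ring, bar_cast]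
  have cast2 : bernoulliBar (q + 1) ((h : ℝ) * x)
      = (((Polynomial.bernoulli (q + 1)).eval (Int.fract ((h : ℚ) * x)) : ℚ) : ℝ) := by
    rw [show (h : ℝ) * (x : ℝ) = (((h : ℚ) * x : ℚ) : ℝ) by push_cast; ring, bar_cast]
  simp_rw [cast1, cast2]
  rw [eq_div_iff (pow_ne_zero _ hqr)]
  exact_mod_cast key2

lemma sum_red (h m q : ℕ) (hh : 0 < h) (hm : 0 < m) :
    ∑ μ ∈ Finset.range m, ∑ ν ∈ Finset.range h,
        ((m : ℝ) * h) ^ q * ((μ : ℝ) * h) * bernoulliBar (q + 1) ((ν : ℝ) / h + (μ : ℝ) / m)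
      = (h : ℝ) * (m : ℝ) ^ (q + 1) * genDedekindSum (q + 1) h m := by
  have hqr : (h : ℝ) ≠ 0 := Nat.cast_ne_zero.2 hh.ne'
  have hmr : (m : ℝ) ≠ 0 := Nat.cast_ne_zero.2 hm.ne'
  have inner : ∀ μ : ℕ, ∑ ν ∈ Finset.range h, bernoulliBar (q + 1) ((ν : ℝ) / h + (μ : ℝ) / m)
      = bernoulliBar (q + 1) ((h : ℝ) * μ / m) / (h : ℝ) ^ q := by
    intro μ
    have key := raabe_real h q hh ((μ : ℚ) / m)
    rw [show (((μ : ℚ) / m : ℚ) : ℝ) = (μ : ℝ) / m by push_cast; ring] at key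
    rw [show (h : ℝ) * ((μ : ℝ) / m) = (h : ℝ) * μ / m by ring] at key
    rw [← key]
    exact Finset.sum_congr rfl fun ν _ => by rw [add_comm ((ν : ℝ) / h)]
  calc ∑ μ ∈ Finset.range m, ∑ ν ∈ Finset.range h,
        ((m : ℝ) * h) ^ q * ((μ : ℝ) * h) * bernoulliBar (q + 1) ((ν : ℝ) / h + (μ : ℝ) / m)
      = ∑ μ ∈ Finset.range m,
          ((m : ℝ) * h) ^ q * ((μ : ℝ) * h) * (bernoulliBar (q + 1) ((h : ℝ) * μ / m) / (h : ℝ) ^ q) := by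
        refine Finset.sum_congr rfl fun μ _ => ?_
        rw [← Finset.mul_sum, inner μ]
    _ = ∑ μ ∈ Finset.range m,
          (h : ℝ) * (m : ℝ) ^ (q + 1) * ((μ : ℝ) / m * bernoulliBar (q + 1) ((h : ℝ) * μ / m)) := by
        refine Finset.sum_congr rfl fun μ _ => ?_
        rw [mul_pow]
        field_simp
        ring
    _ = (h : ℝ) * (m : ℝ) ^ (q + 1) *
          ∑ μ ∈ Finset.range m, (μ : ℝ) / m * bernoulliBar (q + 1) ((h : ℝ) * μ / m) := by
        rw [Finset.mul_sum]
    _ = (h : ℝ) * (m : ℝ) ^ (q + 1) * genDedekindSum (q + 1) h m := by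
        rw [genDedekindSum, Finset.range_eq_Ico, Finset.sum_eq_sum_Ico_succ_bot hm]
        simp

end RaabeAux

/-- Reciprocity for Apostol's generalized Dedekind sums. -/
theorem genDedekind_reciprocity (h m p : ℕ) (hh : 0 < h) (hm : 0 < m)
    (hcop : Nat.Coprime h m) (hp : 0 < p) :
    (h : ℝ) * (m : ℝ) ^ p * genDedekindSum p h m +
        (m : ℝ) * (h : ℝ) ^ p * genDedekindSum p m h =
      ∑ μ ∈ Finset.range m, ∑ ν ∈ Finset.range h,
        ((m : ℝ) * h) ^ (p - 1) * ((μ : ℝ) * h + (m : ℝ) * ν) *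
          bernoulliBar p ((ν : ℝ) / h + (μ : ℝ) / m) := by
  obtain ⟨q, rfl⟩ : ∃ q, p = q + 1 := ⟨p - 1, (Nat.succ_pred_eq_of_pos hp).symm⟩
  have hsplit : ∀ μ ν : ℕ,
      ((m : ℝ) * h) ^ (q + 1 - 1) * ((μ : ℝ) * h + (m : ℝ) * ν) *
          bernoulliBar (q + 1) ((ν : ℝ) / h + (μ : ℝ) / m)
        = ((m : ℝ) * h) ^ q * ((μ : ℝ) * h) * bernoulliBar (q + 1) ((ν : ℝ) / h + (μ : ℝ) / m)
          + ((h : ℝ) * m) ^ q * ((ν : ℝ) * m) *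
              bernoulliBar (q + 1) ((ν : ℝ) / h + (μ : ℝ) / m) := by
    intro μ ν
    rw [Nat.add_sub_cancel, show (h : ℝ) * m = (m : ℝ) * h by ring]
    ring
  simp_rw [hsplit, Finset.sum_add_distrib]
  rw [sum_red h m q hh hm]
  congr 1
  rw [Finset.sum_comm]
  have harg : ∀ ν μ : ℕ, bernoulliBar (q + 1) ((ν : ℝ) / h + (μ : ℝ) / m)
      = bernoulliBar (q + 1) ((μ : ℝ) / m + (ν : ℝ) / h) :=
    fun ν μ => by rw [add_comm ((ν : ℝ) / h)]
  simp_rw [harg]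
  exact (sum_red m h q hm hh).symm
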